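/- The canonical RFA of a regular language L is residual: every state accepts a residual language of L. -/

import Mathlib

def res {α : Type*} (L : Set (List α)) (u : List α) : Set (List α) := {v | u ++ v ∈ L}

def Res {α : Type*} (L : Set (List α)) : Set (Set (List α)) := {L' | ∃ u, L' = res L u}

/-- A language is prime in a class `𝕃` if it belongs to `𝕃` and is not the union of the
languages of `𝕃` strictly contained in it. -/
def IsPrimeIn {α : Type*} (𝕃 : Set (Set (List α))) (L : Set (List α)) : Prop :=
  L ∈ 𝕃 ∧ L ≠ ⋃₀ {L' | L' ∈ 𝕃 ∧ L' ⊂ L}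

def IsRegularLang {α : Type*} (L : Set (List α)) : Prop :=
  ∃ (σ : Type) (_ : Fintype σ) (M : DFA α σ), ∀ w, w ∈ M.accepts ↔ w ∈ L

/-- The canonical RFA of a language `L`: states are the prime residual languages of `L`. -/
def canonicalRFA {α : Type*} (L : Set (List α)) :
    NFA α {L' : Set (List α) // IsPrimeIn (Res L) L'} where
  step q a := {q' | q'.1 ⊆ res q.1 [a]}
  start := {q | q.1 ⊆ L}
  accept := {q | [] ∈ q.1}

/-- The language accepted from a single state `q` of an NFA. -/
def lq {α σ : Type*} (M : NFA α σ) (q : σ) : Set (List α) :=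
  {w | (M.evalFrom {q} w ∩ M.accept).Nonempty}

section Aux
variable {α : Type*} (L : Set (List α))

lemma res_res (u v : List α) : res (res L u) v = res L (u ++ v) := by
  ext w; simp [res, List.append_assoc]

lemma res_nil : res L [] = L := by ext w; simp [res]

lemma res_mono {L₁ L₂ : Set (List α)} (h : L₁ ⊆ L₂) (u : List α) : res L₁ u ⊆ res L₂ u :=
  fun _ hv => h hv

lemma res_mem_Res {L' : Set (List α)} (h : L' ∈ Res L) (u : List α) : res L' u ∈ Res L := by
  obtain ⟨v, rfl⟩ := h
  exact ⟨v ++ u, (res_res L v u)⟩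

lemma Res_finite (hreg : IsRegularLang L) : (Res L).Finite := by
  obtain ⟨σ, hσ, M, hM⟩ := hreg
  have hsub : Res L ⊆ (fun s : σ => {v | M.evalFrom s v ∈ M.accept}) '' Set.univ := by
    rintro _ ⟨u, rfl⟩
    refine ⟨M.eval u, trivial, ?_⟩
    ext v
    simp only [res, Set.mem_setOf_eq]
    rw [← hM, DFA.mem_accepts]
    rw [show M.eval (u ++ v) = M.evalFrom (M.eval u) v from DFA.evalFrom_of_append _ _ _ _]
  exact Set.Finite.subset (Set.toFinite _) hsub

lemma exists_prime (hfin : (Res L).Finite) {M : Set (List α)} (hM : M ∈ Res L)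
    {w : List α} (hw : w ∈ M) :
    ∃ p, IsPrimeIn (Res L) p ∧ p ⊆ M ∧ w ∈ p := by
  set S := {M' | M' ∈ Res L ∧ M' ⊆ M ∧ w ∈ M'} with hS
  have hSfin : S.Finite := hfin.subset (fun x hx => hx.1)
  have hSne : S.Nonempty := ⟨M, hM, subset_rfl, hw⟩
  obtain ⟨p, hpS, hmin⟩ := Set.Finite.exists_minimalFor id S hSfin hSne
  refine ⟨p, ⟨hpS.1, ?_⟩, hpS.2.1, hpS.2.2⟩
  intro heq
  have hw2 : w ∈ ⋃₀ {L' | L' ∈ Res L ∧ L' ⊂ p} := heq ▸ hpS.2.2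
  obtain ⟨L', ⟨hL', hsub⟩, hwL'⟩ := hw2
  have hmem : L' ∈ S := ⟨hL', hsub.1.trans hpS.2.1, hwL'⟩
  exact hsub.2 (hmin hmem hsub.1)

lemma nfa_evalFrom_mono {σ : Type*} (M : NFA α σ) (w : List α) :
    ∀ {S T : Set σ}, S ⊆ T → M.evalFrom S w ⊆ M.evalFrom T w := by
  induction w with
  | nil => intro S T h; simpa [NFA.evalFrom] using h
  | cons a w ih =>
    intro S T h
    have : M.stepSet S a ⊆ M.stepSet T a := by
      intro x hx
      rw [NFA.mem_stepSet] at hx ⊢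
      obtain ⟨s, hs, hx⟩ := hx
      exact ⟨s, h hs, hx⟩
    exact ih this

lemma evalFrom_subset (S : Set {L' : Set (List α) // IsPrimeIn (Res L) L'}) (w : List α) :
    (canonicalRFA L).evalFrom S w ⊆ {p | ∃ q ∈ S, p.1 ⊆ res q.1 w} := by
  induction w generalizing S with
  | nil =>
    intro p hp
    simp only [NFA.evalFrom, List.foldl_nil] at hp
    exact ⟨p, hp, by rw [res_nil]⟩
  | cons a w ih =>
    intro p hp
    have hp' : p ∈ (canonicalRFA L).evalFrom ((canonicalRFA L).stepSet S a) w := hp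
    obtain ⟨q', hq', hsub⟩ := ih _ hp'
    rw [NFA.mem_stepSet] at hq'
    obtain ⟨q, hq, hstep⟩ := hq'
    have hstep' : q'.1 ⊆ res q.1 [a] := hstep
    refine ⟨q, hq, hsub.trans ?_⟩
    rw [show (a :: w) = [a] ++ w from rfl, ← res_res]
    exact res_mono hstep' w

lemma mem_evalFrom_of_mem (hfin : (Res L).Finite)
    (q : {L' : Set (List α) // IsPrimeIn (Res L) L'}) (w : List α) (hw : w ∈ q.1) :
    ∃ p ∈ (canonicalRFA L).evalFrom {q} w, [] ∈ p.1 := by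
  induction w generalizing q with
  | nil => exact ⟨q, by simp [NFA.evalFrom], hw⟩
  | cons a w ih =>
    have hres : res q.1 [a] ∈ Res L := res_mem_Res L q.2.1 [a]
    have hw' : w ∈ res q.1 [a] := hw
    obtain ⟨p', hp', hsub, hwp⟩ := exists_prime L hfin hres hw'
    obtain ⟨p, hp, hnil⟩ := ih ⟨p', hp'⟩ hwp
    refine ⟨p, ?_, hnil⟩
    have hmem : (⟨p', hp'⟩ : {L' : Set (List α) // IsPrimeIn (Res L) L'}) ∈
        (canonicalRFA L).stepSet {q} a := by
      rw [NFA.mem_stepSet]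
      exact ⟨q, rfl, hsub⟩
    have h1 : ({⟨p', hp'⟩} : Set _) ⊆ (canonicalRFA L).stepSet {q} a := by
      intro x hx; rw [Set.mem_singleton_iff] at hx; subst hx; exact hmem
    exact nfa_evalFrom_mono (canonicalRFA L) w h1 hp

lemma lq_eq (hfin : (Res L).Finite) (q : {L' : Set (List α) // IsPrimeIn (Res L) L'}) :
    lq (canonicalRFA L) q = q.1 := by
  ext w
  constructor
  · rintro ⟨p, hp, hacc⟩
    obtain ⟨q', hq', hsub⟩ := evalFrom_subset L {q} w hp
    rw [Set.mem_singleton_iff] at hq'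
    have h0 : [] ∈ res q'.1 w := hsub hacc
    have h1 : w ∈ q'.1 := by simpa [res] using h0
    rwa [hq'] at h1
  · intro hw
    obtain ⟨p, hp, hnil⟩ := mem_evalFrom_of_mem L hfin q w hw
    exact ⟨p, hp, hnil⟩

lemma accepts_eq (hfin : (Res L).Finite) :
    ((canonicalRFA L).accepts : Set (List α)) = L := by
  ext w
  rw [NFA.mem_accepts]
  constructor
  · rintro ⟨p, hacc, hp⟩
    obtain ⟨q, hq, hsub⟩ := evalFrom_subset L _ w hp
    have : [] ∈ res q.1 w := hsub hacc
    have hwq : w ∈ q.1 := by simpa [res] using this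
    exact hq hwq
  · intro hw
    have hL : L ∈ Res L := ⟨[], (res_nil L).symm⟩
    obtain ⟨p, hp, hsub, hwp⟩ := exists_prime L hfin hL hw
    obtain ⟨p', hp', hnil⟩ := mem_evalFrom_of_mem L hfin ⟨p, hp⟩ w hwp
    have h1 : ({(⟨p, hp⟩ : {L' : Set (List α) // IsPrimeIn (Res L) L'})} : Set _) ⊆
        (canonicalRFA L).start := by
      intro x hx; rw [Set.mem_singleton_iff] at hx; subst hx; exact hsub
    exact ⟨p', hnil, nfa_evalFrom_mono (canonicalRFA L) w h1 hp'⟩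

end Aux

theorem canonicalRFA_is_residual {α : Type*} (L : Set (List α)) (hreg : IsRegularLang L)
    (q : {L' : Set (List α) // IsPrimeIn (Res L) L'}) :
    lq (canonicalRFA L) q ∈ Res ((canonicalRFA L).accepts : Set (List α)) := by
  have hfin := Res_finite L hreg
  obtain ⟨u, hu⟩ := q.2.1
  exact ⟨u, by rw [lq_eq L hfin q, accepts_eq L hfin, hu]⟩
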